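/- Let Ω ⊆ ℝ² be a convex closed set. If A_Ω = {(i,j) ∈ ℤ² : inf_Ω (ix+jy) > -∞} equals {(0,0)} and Ω has nonempty interior, then Ω is either all of ℝ², or a half-plane whose boundary has irrational slope, or a strip between two parallel lines of irrational slope. -/

import Mathlib

/-- `(a,b)` is proportional to a nonzero integer vector. -/
def normalIsRational (a b : ℝ) : Prop :=
  ∃ m n : ℤ, (m, n) ≠ ((0 : ℤ), (0 : ℤ)) ∧ a * (n : ℝ) = b * (m : ℝ)

namespace Stmt3Aux

noncomputable def dotf (v : ℝ × ℝ) : ℝ × ℝ → ℝ := fun p => v.1 * p.1 + v.2 * p.2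

def memB (Ω : Set (ℝ × ℝ)) (v : ℝ × ℝ) : Prop := BddBelow (dotf v '' Ω)

lemma smul_memB {Ω : Set (ℝ × ℝ)} {v : ℝ × ℝ} {t : ℝ} (ht : 0 ≤ t)
    (hv : memB Ω v) : memB Ω (t • v) := by
  obtain ⟨c, hc⟩ := hv
  refine ⟨t * c, ?_⟩
  rintro _ ⟨y, hy, rfl⟩
  have h1 : c ≤ dotf v y := hc ⟨y, hy, rfl⟩
  have : dotf (t • v) y = t * dotf v y := by
    simp [dotf, Prod.smul_fst, Prod.smul_snd, smul_eq_mul]; ring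
  rw [this]
  exact mul_le_mul_of_nonneg_left h1 ht

lemma add_memB {Ω : Set (ℝ × ℝ)} {v w : ℝ × ℝ}
    (hv : memB Ω v) (hw : memB Ω w) : memB Ω (v + w) := by
  obtain ⟨c, hc⟩ := hv
  obtain ⟨d, hd⟩ := hw
  refine ⟨c + d, ?_⟩
  rintro _ ⟨y, hy, rfl⟩
  have h1 : c ≤ dotf v y := hc ⟨y, hy, rfl⟩
  have h2 : d ≤ dotf w y := hd ⟨y, hy, rfl⟩
  have : dotf (v + w) y = dotf v y + dotf w y := by
    simp [dotf]; ring
  rw [this]; linarith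

lemma sep {Ω : Set (ℝ × ℝ)} (hconv : Convex ℝ Ω) (hcl : IsClosed Ω)
    (hne : Ω.Nonempty) {p : ℝ × ℝ} (hp : p ∉ Ω) :
    ∃ v : ℝ × ℝ, memB Ω v ∧ v ≠ 0 ∧ ∃ r : ℝ,
      dotf v p < r ∧ ∀ y ∈ Ω, r ≤ dotf v y := by
  obtain ⟨f, u, hfp, hfb⟩ := geometric_hahn_banach_point_closed hconv hcl hp
  have hf : ∀ y : ℝ × ℝ, f y = dotf (f (1, 0), f (0, 1)) y := by
    intro y
    have hy : y = y.1 • ((1 : ℝ), (0 : ℝ)) + y.2 • ((0 : ℝ), (1 : ℝ)) := by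
      ext <;> simp
    calc f y = f (y.1 • ((1:ℝ),(0:ℝ)) + y.2 • ((0:ℝ),(1:ℝ))) := by rw [← hy]
    _ = y.1 * f (1, 0) + y.2 * f (0, 1) := by
        rw [map_add, map_smul, map_smul]; simp [smul_eq_mul]
    _ = dotf (f (1, 0), f (0, 1)) y := by simp [dotf]; ring
  refine ⟨(f (1, 0), f (0, 1)), ⟨u, ?_⟩, ?_, u, ?_, ?_⟩
  · rintro _ ⟨y, hy, rfl⟩
    rw [← hf]; exact (hfb y hy).le
  · intro h0
    obtain ⟨y, hy⟩ := hne
    have h1 := hfb y hy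
    rw [hf y, h0] at h1
    rw [hf p, h0] at hfp
    simp [dotf] at h1 hfp
    linarith
  · rw [← hf]; exact hfp
  · intro y hy; rw [← hf]; exact (hfb y hy).le

lemma prop_of_det {v u : ℝ × ℝ} (hv : v ≠ 0) (h : v.1 * u.2 = v.2 * u.1) :
    ∃ t : ℝ, u = t • v := by
  rcases eq_or_ne v.1 0 with h1 | h1
  · have h2 : v.2 ≠ 0 := by
      intro h2; exact hv (Prod.ext h1 h2)
    have hu1 : u.1 = 0 := by
      have := h; rw [h1] at this; simp at this
      rcases this with h' | h'
      · exact absurd h' h2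
      · exact h'
    refine ⟨u.2 / v.2, ?_⟩
    ext
    · simp [h1, hu1]
    · simp [smul_eq_mul]; field_simp
  · refine ⟨u.1 / v.1, ?_⟩
    ext
    · simp [smul_eq_mul]; field_simp
    · simp [smul_eq_mul]
      field_simp
      linarith [h]

lemma g_recon {v w : ℝ × ℝ} (hD : v.1 * w.2 - v.2 * w.1 ≠ 0) (p : ℝ × ℝ) :
    ((p.1 * w.2 - p.2 * w.1) / (v.1 * w.2 - v.2 * w.1)) • v +
      ((p.2 * v.1 - p.1 * v.2) / (v.1 * w.2 - v.2 * w.1)) • w = p := by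
  ext
  · simp only [Prod.fst_add, Prod.smul_fst, smul_eq_mul]
    rw [div_mul_eq_mul_div, div_mul_eq_mul_div, ← add_div, div_eq_iff hD]; ring
  · simp only [Prod.snd_add, Prod.smul_snd, smul_eq_mul]
    rw [div_mul_eq_mul_div, div_mul_eq_mul_div, ← add_div, div_eq_iff hD]; ring

/-- If two vectors in the barrier cone were linearly independent, the open cone
they span would contain a nonzero integer vector, contradicting `hA`. -/
lemma collinear_of_B {Ω : Set (ℝ × ℝ)}
    (hA' : ∀ m n : ℤ, memB Ω ((m : ℝ), (n : ℝ)) → m = 0 ∧ n = 0)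
    {v w : ℝ × ℝ} (hv : memB Ω v) (hw : memB Ω w) :
    v.1 * w.2 = v.2 * w.1 := by
  by_contra hD
  have hD : v.1 * w.2 - v.2 * w.1 ≠ 0 := sub_ne_zero_of_ne hD
  set D := v.1 * w.2 - v.2 * w.1 with hDdef
  set g : ℝ × ℝ → ℝ × ℝ :=
    fun p => ((p.1 * w.2 - p.2 * w.1) / D, (p.2 * v.1 - p.1 * v.2) / D) with hg
  have hgcont : Continuous g := by
    apply Continuous.prodMk <;> fun_prop
  set U : Set (ℝ × ℝ) := g ⁻¹' (Set.Ioi (0:ℝ) ×ˢ Set.Ioi (0:ℝ)) with hU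
  have hUopen : IsOpen U := (isOpen_Ioi.prod isOpen_Ioi).preimage hgcont
  have hzU : v + w ∈ U := by
    simp only [hU, Set.mem_preimage, hg, Set.mem_prod, Set.mem_Ioi]
    constructor
    · have : ((v + w).1 * w.2 - (v + w).2 * w.1) / D = 1 := by
        rw [div_eq_one_iff_eq hD, hDdef]; simp only [Prod.fst_add, Prod.snd_add]; ring
      rw [this]; norm_num
    · have : ((v + w).2 * v.1 - (v + w).1 * v.2) / D = 1 := by
        rw [div_eq_one_iff_eq hD, hDdef]; simp only [Prod.fst_add, Prod.snd_add]; ring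
      rw [this]; norm_num
  obtain ⟨ε, hε, hball⟩ := Metric.isOpen_iff.1 hUopen _ hzU
  obtain ⟨N, hN⟩ := exists_nat_gt (1 / ε)
  have hNpos : (0:ℝ) < N := lt_trans (by positivity) hN
  have hNε : 1 < (N : ℝ) * ε := by
    rw [div_lt_iff₀ hε] at hN; linarith
  set z : ℝ × ℝ := v + w with hz
  set m : ℤ := round ((N : ℝ) * z.1) with hm
  set n : ℤ := round ((N : ℝ) * z.2) with hn
  set q : ℝ × ℝ := ((m : ℝ), (n : ℝ)) with hq
  have hq' : (N : ℝ)⁻¹ • q ∈ Metric.ball z ε := by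
    rw [Metric.mem_ball, Prod.dist_eq]
    have h1 : dist ((N : ℝ)⁻¹ • q).1 z.1 < ε := by
      simp only [Prod.smul_fst, smul_eq_mul, Real.dist_eq]
      have : (N : ℝ)⁻¹ * (m : ℝ) - z.1 = ((m : ℝ) - (N : ℝ) * z.1) / N := by
        field_simp
      rw [this, abs_div, abs_of_pos hNpos]
      rw [div_lt_iff₀ hNpos]
      calc |(m : ℝ) - (N : ℝ) * z.1| ≤ 1 / 2 := by
            have := abs_sub_round ((N : ℝ) * z.1); rw [abs_sub_comm] at this
            exact this
      _ < ε * N := by rw [mul_comm]; linarith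
    have h2 : dist ((N : ℝ)⁻¹ • q).2 z.2 < ε := by
      simp only [Prod.smul_snd, smul_eq_mul, Real.dist_eq]
      have : (N : ℝ)⁻¹ * (n : ℝ) - z.2 = ((n : ℝ) - (N : ℝ) * z.2) / N := by
        field_simp
      rw [this, abs_div, abs_of_pos hNpos]
      rw [div_lt_iff₀ hNpos]
      calc |(n : ℝ) - (N : ℝ) * z.2| ≤ 1 / 2 := by
            have := abs_sub_round ((N : ℝ) * z.2); rw [abs_sub_comm] at this
            exact this
      _ < ε * N := by rw [mul_comm]; linarith
    exact max_lt h1 h2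
  have hqU : (N : ℝ)⁻¹ • q ∈ U := hball hq'
  simp only [hU, Set.mem_preimage, Set.mem_prod, Set.mem_Ioi] at hqU
  obtain ⟨ht, hs⟩ := hqU
  set q' : ℝ × ℝ := (N : ℝ)⁻¹ • q with hq'd
  have hrecon := g_recon hD q'
  -- q' = t • v + s • w with t, s > 0, hence q' ∈ B, hence q ∈ B
  have hq'B : memB Ω q' := by
    rw [← hrecon]
    exact add_memB (smul_memB (le_of_lt ht) hv) (smul_memB (le_of_lt hs) hw)
  have hqB : memB Ω q := by
    have : q = (N : ℝ) • q' := by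
      rw [hq'd, smul_smul]
      rw [mul_inv_cancel₀ (ne_of_gt hNpos), one_smul]
    rw [this]
    exact smul_memB (le_of_lt hNpos) hq'B
  obtain ⟨hm0, hn0⟩ := hA' m n hqB
  -- q = 0, contradiction with g q' having positive coordinates
  have hq0 : q' = 0 := by
    rw [hq'd, hq, hm0, hn0]; simp
  rw [hq0] at ht
  simp [hg] at ht

end Stmt3Aux

open Stmt3Aux in
/-- If no nonzero integer linear functional is bounded below on a convex closed set
`Ω ⊆ ℝ²` with nonempty interior, then `Ω` is all of `ℝ²`, or a half-plane whose
boundary has irrational slope, or a strip between two parallel lines of irrational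
slope. -/
theorem stmt_3 (Ω : Set (ℝ × ℝ)) (hconv : Convex ℝ Ω) (hcl : IsClosed Ω)
    (hint : (interior Ω).Nonempty)
    (hA : ∀ ij : ℤ × ℤ,
      BddBelow ((fun p : ℝ × ℝ => (ij.1 : ℝ) * p.1 + (ij.2 : ℝ) * p.2) '' Ω) →
      ij = (0, 0)) :
    Ω = Set.univ ∨
    (∃ a b c : ℝ, ¬ normalIsRational a b ∧
      Ω = {p : ℝ × ℝ | a * p.1 + b * p.2 ≤ c}) ∨
    (∃ a b c₁ c₂ : ℝ, ¬ normalIsRational a b ∧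
      Ω = {p : ℝ × ℝ | c₁ ≤ a * p.1 + b * p.2 ∧ a * p.1 + b * p.2 ≤ c₂}) := by
  classical
  obtain ⟨p₀, hp₀⟩ := hint
  have hΩne : Ω.Nonempty := ⟨p₀, interior_subset hp₀⟩
  have hA' : ∀ m n : ℤ, memB Ω ((m : ℝ), (n : ℝ)) → m = 0 ∧ n = 0 := by
    intro m n h
    have := hA (m, n) h
    exact ⟨congrArg Prod.fst this, congrArg Prod.snd this⟩
  by_cases hB0 : ∀ u : ℝ × ℝ, memB Ω u → u = 0
  · left
    ext p
    simp only [Set.mem_univ, iff_true]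
    by_contra hp
    obtain ⟨v, hvB, hv0, _⟩ := sep hconv hcl hΩne hp
    exact hv0 (hB0 v hvB)
  · push_neg at hB0
    obtain ⟨v, hvB, hv0⟩ := hB0
    -- v has irrational normal
    have hvirr : ¬ normalIsRational v.1 v.2 := by
      rintro ⟨m, n, hmn, heq⟩
      -- v = t • (m, n) for some t ≠ 0
      have hmn' : ((m : ℝ), (n : ℝ)) ≠ (0 : ℝ × ℝ) := by
        intro h
        apply hmn
        have h1 : (m : ℝ) = 0 := congrArg Prod.fst h
        have h2 : (n : ℝ) = 0 := congrArg Prod.snd h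
        exact Prod.ext (by exact_mod_cast h1) (by exact_mod_cast h2)
      have hdet : ((m : ℝ), (n : ℝ)).1 * v.2 = ((m : ℝ), (n : ℝ)).2 * v.1 := by
        simp only []
        linarith [heq]
      obtain ⟨t, htv⟩ := prop_of_det hmn' hdet
      have ht0 : t ≠ 0 := by
        intro h; rw [h, zero_smul] at htv; exact hv0 htv
      rcases lt_or_gt_of_ne ht0 with htneg | htpos
      ·
        have : (((-m : ℤ) : ℝ), ((-n : ℤ) : ℝ)) = (-t)⁻¹ • v := by
          push_cast
          rw [htv, smul_smul]
          have : (-t)⁻¹ * t = -1 := by field_simp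
          rw [this]; ext <;> simp
        have hmem : memB Ω (((-m : ℤ) : ℝ), ((-n : ℤ) : ℝ)) := by
          rw [this]
          exact smul_memB (inv_nonneg.2 (by linarith)) hvB
        obtain ⟨h1, h2⟩ := hA' _ _ hmem
        apply hmn
        exact Prod.ext (by omega) (by omega)
      · have : (((m : ℤ) : ℝ), ((n : ℤ) : ℝ)) = t⁻¹ • v := by
          rw [htv, smul_smul, inv_mul_cancel₀ ht0, one_smul]
        have hmem : memB Ω (((m : ℤ) : ℝ), ((n : ℤ) : ℝ)) := by
          rw [this]
          exact smul_memB (by positivity) hvB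
        obtain ⟨h1, h2⟩ := hA' _ _ hmem
        apply hmn
        exact Prod.ext h1 h2
    set c₁ : ℝ := sInf (dotf v '' Ω) with hc₁
    have hlb : ∀ y ∈ Ω, c₁ ≤ dotf v y := fun y hy => csInf_le hvB ⟨y, hy, rfl⟩
    -- refined separation: any separating functional is a multiple of v
    have hsep' : ∀ p : ℝ × ℝ, p ∉ Ω → ∃ t : ℝ, t ≠ 0 ∧ memB Ω (t • v) ∧
        ∃ r : ℝ, t * dotf v p < r ∧ ∀ y ∈ Ω, r ≤ t * dotf v y := by
      intro p hp
      obtain ⟨u, huB, hu0, r, hup, huy⟩ := sep hconv hcl hΩne hp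
      have hdet : v.1 * u.2 = v.2 * u.1 := collinear_of_B hA' hvB huB
      obtain ⟨t, htu⟩ := prop_of_det hv0 hdet
      have ht0 : t ≠ 0 := by
        intro h; rw [h, zero_smul] at htu; exact hu0 htu
      have hdot : ∀ y : ℝ × ℝ, dotf u y = t * dotf v y := by
        intro y
        rw [htu]
        simp [dotf, smul_eq_mul]; ring
      refine ⟨t, ht0, by rw [← htu]; exact huB, r, ?_, ?_⟩
      · rw [← hdot]; exact hup
      · intro y hy; rw [← hdot]; exact huy y hy
    by_cases hneg : memB Ω (-v)
    · -- strip case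
      right; right
      set c₂ : ℝ := -sInf (dotf (-v) '' Ω) with hc₂
      have hub : ∀ y ∈ Ω, dotf v y ≤ c₂ := by
        intro y hy
        have h1 : sInf (dotf (-v) '' Ω) ≤ dotf (-v) y := csInf_le hneg ⟨y, hy, rfl⟩
        have h2 : dotf (-v) y = -dotf v y := by simp [dotf]; ring
        rw [h2] at h1; rw [hc₂]; linarith
      refine ⟨v.1, v.2, c₁, c₂, hvirr, ?_⟩
      ext p
      simp only [Set.mem_setOf_eq]
      constructor
      · intro hp
        exact ⟨hlb p hp, hub p hp⟩
      · rintro ⟨h1, h2⟩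
        by_contra hp
        obtain ⟨t, ht0, htB, r, hrp, hry⟩ := hsep' p hp
        simp only [dotf] at hrp
        rcases lt_or_gt_of_ne ht0 with htneg | htpos
        · -- t < 0 : use c₂
          have hkey : ∀ y ∈ Ω, dotf v y ≤ r / t := by
            intro y hy
            rw [le_div_iff_of_neg htneg]
            nlinarith [hry y hy]
          have hlbneg : ∀ x ∈ dotf (-v) '' Ω, -(r / t) ≤ x := by
            rintro _ ⟨y, hy, rfl⟩
            have h3 : dotf (-v) y = -dotf v y := by simp [dotf]; ring
            rw [h3]
            linarith [hkey y hy]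
          have h4 : -(r / t) ≤ sInf (dotf (-v) '' Ω) :=
            le_csInf ⟨dotf (-v) p₀, ⟨p₀, interior_subset hp₀, rfl⟩⟩ hlbneg
          have h5 : c₂ ≤ r / t := by rw [hc₂]; linarith
          have h6 : t * c₂ ≥ r := by
            have := mul_le_mul_of_nonpos_left h5 (le_of_lt htneg)
            rw [mul_div_cancel₀ r ht0] at this
            linarith
          nlinarith [mul_le_mul_of_nonpos_left h2 (le_of_lt htneg)]
        · -- t > 0 : use c₁
          have hkey : ∀ y ∈ Ω, r / t ≤ dotf v y := by
            intro y hy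
            rw [div_le_iff₀ htpos]
            nlinarith [hry y hy]
          have h4 : r / t ≤ c₁ :=
            le_csInf ⟨dotf v p₀, ⟨p₀, interior_subset hp₀, rfl⟩⟩
              (by rintro _ ⟨y, hy, rfl⟩; exact hkey y hy)
          have h6 : r ≤ t * c₁ := by
            have := mul_le_mul_of_nonneg_left h4 (le_of_lt htpos)
            rw [mul_div_cancel₀ r ht0] at this
            linarith
          nlinarith [mul_le_mul_of_nonneg_left h1 (le_of_lt htpos)]
    · -- half-plane case
      right; left
      refine ⟨-v.1, -v.2, -c₁, ?_, ?_⟩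
      · rintro ⟨m, n, hmn, heq⟩
        exact hvirr ⟨m, n, hmn, by linarith⟩
      ext p
      simp only [Set.mem_setOf_eq]
      constructor
      · intro hp
        have := hlb p hp
        simp only [dotf] at this
        linarith
      · intro h1
        have h1' : c₁ ≤ dotf v p := by simp only [dotf]; linarith
        by_contra hp
        obtain ⟨t, ht0, htB, r, hrp, hry⟩ := hsep' p hp
        rcases lt_or_gt_of_ne ht0 with htneg | htpos
        · -- t < 0 gives -v ∈ B, contradiction
          apply hneg
          have : -v = (-t⁻¹) • (t • v) := by
            rw [smul_smul]
            have : -t⁻¹ * t = -1 := by field_simp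
            rw [this]; ext <;> simp
          rw [this]
          refine smul_memB ?_ htB
          rw [← inv_neg]
          exact (inv_pos.2 (by linarith)).le
        · have hkey : ∀ y ∈ Ω, r / t ≤ dotf v y := by
            intro y hy
            rw [div_le_iff₀ htpos]
            nlinarith [hry y hy]
          have h4 : r / t ≤ c₁ :=
            le_csInf ⟨dotf v p₀, ⟨p₀, interior_subset hp₀, rfl⟩⟩
              (by rintro _ ⟨y, hy, rfl⟩; exact hkey y hy)
          have h6 : r ≤ t * c₁ := by
            have := mul_le_mul_of_nonneg_left h4 (le_of_lt htpos)
            rw [mul_div_cancel₀ r ht0] at this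
            linarith
          nlinarith [mul_le_mul_of_nonneg_left h1' (le_of_lt htpos)]
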